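/- Let x, y ∈ ℝⁿ with |x| < |y|, let e := (y − x)/|y − x|, and let T = {z : z·e = λ} be a hyperplane such that dist(x, T) ≥ dist(y, T) and x·e > λ > y·e or x·e < λ < y·e (i.e., T separates or at least the reflection of y across T is on the x-side). Then |y| − |x| ≤ 2 dist(0, T) = 2|λ|. -/

import Mathlib

open RealInnerProductSpace

theorem stmt_2 {n : ℕ} (x y : EuclideanSpace ℝ (Fin n)) (hxy : ‖x‖ < ‖y‖)
    (e : EuclideanSpace ℝ (Fin n)) (he : e = ‖y - x‖⁻¹ • (y - x)) (lam : ℝ)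
    -- `dist(x,T) ≥ dist(y,T)` for the hyperplane `T = {z : ⟪z,e⟫ = λ}`
    (hdist : |⟪x, e⟫ - lam| ≥ |⟪y, e⟫ - lam|)
    -- the reflection `y'` of `y` across `T` lies on the `x`-side: `‖y'‖ ≥ ‖x‖`
    (hrefl : ‖y - (2 * (⟪y, e⟫ - lam)) • e‖ ≥ ‖x‖) :
    ‖y‖ - ‖x‖ ≤ 2 * |lam| := by
  have hne : y - x ≠ 0 := by
    intro h
    have : y = x := by rwa [sub_eq_zero] at h
    simp [this] at hxy
  have hd : (0:ℝ) < ‖y - x‖ := norm_pos_iff.mpr hne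
  have hxe : ⟪x, e⟫ = ‖y - x‖⁻¹ * ⟪x, y - x⟫ := by
    rw [he, real_inner_smul_right]
  have hye : ⟪y, e⟫ = ‖y - x‖⁻¹ * ⟪y, y - x⟫ := by
    rw [he, real_inner_smul_right]
  have hsub : ⟪y, y - x⟫ - ⟪x, y - x⟫ = ‖y - x‖ ^ 2 := by
    rw [← inner_sub_left, real_inner_self_eq_norm_sq]
  have hadd : ⟪y, y - x⟫ + ⟪x, y - x⟫ = ‖y‖ ^ 2 - ‖x‖ ^ 2 := by
    have : ⟪y, y - x⟫ + ⟪x, y - x⟫ = ⟪y + x, y - x⟫ := (inner_add_left y x (y-x)).symm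
    rw [this, inner_sub_right, inner_add_left, inner_add_left,
      real_inner_self_eq_norm_sq, real_inner_self_eq_norm_sq, real_inner_comm x y]
    ring
  -- t - s = ‖y - x‖ > 0
  have hts : ⟪y, e⟫ - ⟪x, e⟫ = ‖y - x‖ := by
    rw [hxe, hye, ← mul_sub, hsub]
    field_simp
  -- from hdist and t > s, conclude s + t ≤ 0 where s,t are signed distances
  have hst : (⟪x, e⟫ - lam) + (⟪y, e⟫ - lam) ≤ 0 := by
    rcases abs_cases (⟪x, e⟫ - lam) with ⟨h1, h2⟩ | ⟨h1, h2⟩ <;>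
      rcases abs_cases (⟪y, e⟫ - lam) with ⟨h3, h4⟩ | ⟨h3, h4⟩ <;>
      nlinarith [hd, hts]
  -- hence 2λ * ‖y-x‖ ≥ ‖y‖² - ‖x‖²
  have key : (‖y‖ ^ 2 - ‖x‖ ^ 2) ≤ 2 * lam * ‖y - x‖ := by
    have h1 : ⟪x, e⟫ + ⟪y, e⟫ = (‖y‖ ^ 2 - ‖x‖ ^ 2) / ‖y - x‖ := by
      rw [hxe, hye, ← mul_add]
      rw [show ⟪x, y - x⟫ + ⟪y, y - x⟫ = ‖y‖ ^ 2 - ‖x‖ ^ 2 by linarith [hadd]]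
      field_simp
    have h2 : ⟪x, e⟫ + ⟪y, e⟫ ≤ 2 * lam := by linarith
    rw [h1] at h2
    have := (div_le_iff₀ hd).mp h2
    linarith
  have hnd : ‖y - x‖ ≤ ‖x‖ + ‖y‖ := by
    calc ‖y - x‖ ≤ ‖y‖ + ‖x‖ := norm_sub_le y x
    _ = ‖x‖ + ‖y‖ := by ring
  have hlam : ‖y‖ - ‖x‖ ≤ 2 * lam := by
    nlinarith [norm_nonneg x, norm_nonneg y]
  have : lam ≤ |lam| := le_abs_self lam
  linarith
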